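/- Let V be a complex normed vector space, S ⊆ ℂⁿ an open set, and φ : S → V a holomorphic map (differentiable over ℂ) which is injective, nowhere vanishing, and whose derivative d_sφ : ℂⁿ → V is injective at every s ∈ S. Fix integers m ≥ 0 and l ≥ 1 and define Φ : ℂˣ × S → V × V by Φ(c, s) := (c^{ml} · φ(s), c^{(m+1)l} · φ(s)). Then: (1) Φ is holomorphic on the open set ℂˣ × S ⊆ ℂ × ℂⁿ and its derivative at every point of ℂˣ × S is injective (Φ is a holomorphic immersion); (2) for (c, s), (c′, s′) ∈ ℂˣ × S one has Φ(c, s) = Φ(c′, s′) if and only if s = s′ and c^l = (c′)^l. In particular, when l = 1 the map Φ is injective. -/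

import Mathlib

/-- Key algebraic lemma: from the two fibre equations we deduce `s = s'` and `c^l = c'^l`. -/
theorem weighted_immersion_aux
    {V : Type*} [NormedAddCommGroup V] [NormedSpace ℂ V]
    (m l : ℕ) (c c' : ℂ) (hc : c ≠ 0) (hc' : c' ≠ 0)
    (x x' : V) (hx' : x' ≠ 0)
    (E1 : c ^ (m * l) • x = c' ^ (m * l) • x')
    (E2 : c ^ ((m + 1) * l) • x = c' ^ ((m + 1) * l) • x') :
    x = x' ∧ c ^ l = c' ^ l := by
  have hb : (m + 1) * l = m * l + l := by ring
  have key : (c' ^ (m * l) * c' ^ l) • x' = (c' ^ (m * l) * c ^ l) • x' := by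
    have h := congrArg (fun y : V => c ^ l • y) E1
    simp only [smul_smul] at h
    rw [← pow_add] at h
    have e : l + m * l = (m + 1) * l := by ring
    rw [e, E2, hb, pow_add] at h
    rw [h, mul_comm]
  have hcl : c ^ l = c' ^ l := by
    have h3 : c' ^ (m * l) * c' ^ l = c' ^ (m * l) * c ^ l := by
      have := sub_eq_zero.mpr key
      rw [← sub_smul] at this
      rcases smul_eq_zero.mp this with h | h
      · exact sub_eq_zero.mp h
      · exact absurd h hx'
    exact (mul_left_cancel₀ (pow_ne_zero _ hc') h3).symm
  refine ⟨?_, hcl⟩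
  have hma : c ^ (m * l) = c' ^ (m * l) := by
    rw [mul_comm m l, pow_mul, pow_mul, hcl]
  rw [hma] at E1
  exact smul_right_injective V (pow_ne_zero _ hc') E1

theorem weighted_immersion
    {V : Type*} [NormedAddCommGroup V] [NormedSpace ℂ V]
    {n : ℕ} (S : Set (Fin n → ℂ)) (hS : IsOpen S)
    (φ : (Fin n → ℂ) → V)
    (hφ : DifferentiableOn ℂ φ S)
    (hφinj : Set.InjOn φ S)
    (hφne : ∀ s ∈ S, φ s ≠ 0)
    (hφimm : ∀ s ∈ S, Function.Injective (fderiv ℂ φ s))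
    (m l : ℕ) (hl : 1 ≤ l)
    (Φ : ℂ × (Fin n → ℂ) → V × V)
    (hΦ : Φ = fun p => (p.1 ^ (m * l) • φ p.2, p.1 ^ ((m + 1) * l) • φ p.2)) :
    (DifferentiableOn ℂ Φ ({c : ℂ | c ≠ 0} ×ˢ S) ∧
      ∀ p ∈ ({c : ℂ | c ≠ 0} ×ˢ S : Set (ℂ × (Fin n → ℂ))),
        Function.Injective (fderiv ℂ Φ p)) ∧
    (∀ c c' : ℂ, c ≠ 0 → c' ≠ 0 → ∀ s ∈ S, ∀ s' ∈ S,
      (Φ (c, s) = Φ (c', s') ↔ s = s' ∧ c ^ l = c' ^ l)) ∧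
    (l = 1 → Set.InjOn Φ ({c : ℂ | c ≠ 0} ×ˢ S)) := by
  -- the fibre description
  have part2 : ∀ c c' : ℂ, c ≠ 0 → c' ≠ 0 → ∀ s ∈ S, ∀ s' ∈ S,
      (Φ (c, s) = Φ (c', s') ↔ s = s' ∧ c ^ l = c' ^ l) := by
    intro c c' hc hc' s hs s' hs'
    constructor
    · intro h
      rw [hΦ] at h
      simp only [Prod.mk.injEq] at h
      obtain ⟨E1, E2⟩ := h
      obtain ⟨hφeq, hcl⟩ := weighted_immersion_aux m l c c' hc hc'
        (φ s) (φ s') (hφne s' hs') E1 E2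
      exact ⟨hφinj hs hs' hφeq, hcl⟩
    · rintro ⟨rfl, hcl⟩
      rw [hΦ]
      have h1 : c ^ (m * l) = c' ^ (m * l) := by
        rw [mul_comm m l, pow_mul, pow_mul, hcl]
      have h2 : c ^ ((m + 1) * l) = c' ^ ((m + 1) * l) := by
        rw [mul_comm (m + 1) l, pow_mul, pow_mul, hcl]
      simp [h1, h2]
  refine ⟨⟨?_, ?_⟩, part2, ?_⟩
  · -- differentiability
    rw [hΦ]
    have hsnd : DifferentiableOn ℂ (fun p : ℂ × (Fin n → ℂ) => φ p.2)
        ({c : ℂ | c ≠ 0} ×ˢ S) :=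
      hφ.comp (differentiable_snd.differentiableOn) (fun p hp => hp.2)
    exact ((differentiable_fst.pow (m * l)).differentiableOn.smul hsnd).prodMk
      ((differentiable_fst.pow ((m + 1) * l)).differentiableOn.smul hsnd)
  · -- immersion
    rintro ⟨c, s⟩ ⟨hc, hs⟩
    simp only [Set.mem_setOf_eq] at hc
    have hφat : DifferentiableAt ℂ φ s := hφ.differentiableAt (hS.mem_nhds hs)
    set Dφ := fderiv ℂ φ s with hDφ
    have hφ' : HasFDerivAt (fun p : ℂ × (Fin n → ℂ) => φ p.2)
        (Dφ.comp (ContinuousLinearMap.snd ℂ ℂ (Fin n → ℂ))) (c, s) :=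
      hφat.hasFDerivAt.comp (c, s) hasFDerivAt_snd
    have hpow : ∀ k : ℕ, HasFDerivAt (fun p : ℂ × (Fin n → ℂ) => p.1 ^ k)
        (((k : ℂ) * c ^ (k - 1)) • ContinuousLinearMap.fst ℂ ℂ (Fin n → ℂ)) (c, s) :=
      fun k => (hasDerivAt_pow k c).comp_hasFDerivAt (c, s) hasFDerivAt_fst
    set a := m * l
    set b := (m + 1) * l
    have hD : HasFDerivAt Φ
        (((c ^ a • (Dφ.comp (ContinuousLinearMap.snd ℂ ℂ (Fin n → ℂ))) +
            ((((a : ℂ) * c ^ (a - 1)) •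
              ContinuousLinearMap.fst ℂ ℂ (Fin n → ℂ)).smulRight (φ s)))).prod
          ((c ^ b • (Dφ.comp (ContinuousLinearMap.snd ℂ ℂ (Fin n → ℂ))) +
            ((((b : ℂ) * c ^ (b - 1)) •
              ContinuousLinearMap.fst ℂ ℂ (Fin n → ℂ)).smulRight (φ s))))) (c, s) := by
      rw [hΦ]
      exact HasFDerivAt.prodMk ((hpow a).smul hφ') ((hpow b).smul hφ')
    rw [hD.fderiv]
    -- injectivity of the explicit derivative
    have hker : ∀ u : ℂ × (Fin n → ℂ),
        (c ^ a • Dφ u.2 + ((a : ℂ) * c ^ (a - 1) * u.1) • φ s = 0 ∧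
         c ^ b • Dφ u.2 + ((b : ℂ) * c ^ (b - 1) * u.1) • φ s = 0) → u = 0 := by
      rintro ⟨v, w⟩ ⟨h1, h2⟩
      dsimp only at h1 h2
      have hb : b = a + l := by simp only [a, b]; ring
      -- multiply h1 by c^l and subtract h2
      have h1' : c ^ b • Dφ w + ((a : ℂ) * c ^ (b - 1) * v) • φ s = 0 := by
        have := congrArg (fun x => c ^ l • x) h1
        simp only [smul_add, smul_smul, smul_zero] at this
        rw [← pow_add] at this
        rcases Nat.eq_zero_or_pos a with ha0 | hapos
        · simpa [ha0, hb] using this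
        · have e1 : l + a = b := by omega
          have e2 : c ^ l * ((a : ℂ) * c ^ (a - 1) * v) = (a : ℂ) * c ^ (b - 1) * v := by
            have e3 : c ^ (b - 1) = c ^ l * c ^ (a - 1) := by
              rw [← pow_add]
              congr 1
              omega
            rw [e3]
            ring
          rw [e1, e2] at this
          exact this
      have hv : v = 0 := by
        have hsub := sub_eq_zero.mpr (h2.trans h1'.symm)
        rw [add_sub_add_left_eq_sub, ← sub_smul] at hsub
        rcases smul_eq_zero.mp hsub with h | h
        · have h' : ((b : ℂ) - (a : ℂ)) * c ^ (b - 1) * v = 0 := by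
            linear_combination h
          rcases mul_eq_zero.mp h' with h'' | h''
          · rcases mul_eq_zero.mp h'' with h3 | h3
            · exfalso
              rw [sub_eq_zero, Nat.cast_inj] at h3
              omega
            · exact absurd h3 (pow_ne_zero _ hc)
          · exact h''
        · exact absurd h (hφne s hs)
      have hw : w = 0 := by
        rw [hv] at h1
        simp only [mul_zero, zero_smul, add_zero] at h1
        rcases smul_eq_zero.mp h1 with h | h
        · exact absurd h (pow_ne_zero _ hc)
        · exact hφimm s hs (by simpa using h)
      simp [hv, hw]
    intro x y hxy
    have hz : x - y = 0 := by
      apply hker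
      have h0 := sub_eq_zero.mpr hxy
      rw [← map_sub] at h0
      have h0' : (_ : V × V) = 0 := h0
      simp only [ContinuousLinearMap.prod_apply, ContinuousLinearMap.add_apply,
        ContinuousLinearMap.coe_smul', Pi.smul_apply, ContinuousLinearMap.coe_comp',
        Function.comp_apply, ContinuousLinearMap.coe_snd', ContinuousLinearMap.smulRight_apply,
        ContinuousLinearMap.coe_fst', Prod.ext_iff, Prod.fst_zero, Prod.snd_zero] at h0'
      obtain ⟨g1, g2⟩ := h0'
      constructor
      · simpa [smul_smul] using g1
      · simpa [smul_smul] using g2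
    exact sub_eq_zero.mp hz
  · -- l = 1 gives injectivity
    rintro rfl ⟨c, s⟩ ⟨hc, hs⟩ ⟨c', s'⟩ ⟨hc', hs'⟩ h
    obtain ⟨hss, hcc⟩ := (part2 c c' hc hc' s hs s' hs').mp h
    simp only [pow_one] at hcc
    simp [hss, hcc]
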